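/- Let t be a function assigning a rational number t(k,j) to every pair of integers k ≥ 0, j ≥ 2. Suppose that t(0,j) = Cat(j−2) for all j ≥ 2, and that k·(j+1)·t(k,j) = (j−1)·(3k+2j−4)·t(k−1,j+1) for all k ≥ 1 and j ≥ 2. Then t(k,j) = j·(j−1)·(3k+2j−4)! / (k!·(k+j−1)!·(k+j)!) for all k ≥ 0 and j ≥ 2. -/

import Mathlib

lemma catalan_fact (m : ℕ) :
    catalan m * (Nat.factorial (m+1) * Nat.factorial (m+2))
      = (m+2) * ((m+1) * Nat.factorial (2*m)) := by
  have h := succ_mul_catalan_eq_centralBinom m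
  have h2 := Nat.choose_mul_factorial_mul_factorial (show m ≤ 2*m by omega)
  have h3 : 2*m - m = m := by omega
  rw [h3] at h2
  have hc : Nat.centralBinom m = (2*m).choose m := rfl
  calc catalan m * (Nat.factorial (m+1) * Nat.factorial (m+2))
      = ((m+1) * catalan m) * Nat.factorial m * Nat.factorial m * ((m+2)*(m+1)) := by
        rw [Nat.factorial_succ (m+1), Nat.factorial_succ m]; ring
    _ = (2*m).choose m * Nat.factorial m * Nat.factorial m * ((m+2)*(m+1)) := by
        rw [h, hc]
    _ = (2*m).factorial * ((m+2)*(m+1)) := by rw [h2]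
    _ = (m+2) * ((m+1) * Nat.factorial (2*m)) := by ring

theorem growth_determines_T (t : ℕ → ℕ → ℚ)
    (hbase : ∀ j : ℕ, 2 ≤ j → t 0 j = (catalan (j - 2) : ℚ))
    (hrec : ∀ k j : ℕ, 1 ≤ k → 2 ≤ j →
      (k : ℚ) * ((j : ℚ) + 1) * t k j
        = ((j : ℚ) - 1) * (3 * (k : ℚ) + 2 * (j : ℚ) - 4) * t (k - 1) (j + 1)) :
    ∀ k j : ℕ, 2 ≤ j →
      t k j = (j * (j - 1) * Nat.factorial (3 * k + 2 * j - 4) : ℚ) /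
        (Nat.factorial k * Nat.factorial (k + j - 1) * Nat.factorial (k + j) : ℚ) := by
  intro k
  induction k with
  | zero =>
    intro j hj
    obtain ⟨m, rfl⟩ : ∃ m, j = m + 2 := ⟨j - 2, by omega⟩
    rw [hbase _ (by omega)]
    have e1 : m + 2 - 2 = m := by omega
    have e2 : 3*0 + 2*(m+2) - 4 = 2*m := by omega
    have e3 : (0:ℕ) + (m+2) - 1 = m+1 := by omega
    have e4 : (0:ℕ) + (m+2) = m+2 := by omega
    have e5 : m + 2 - 1 = m + 1 := by omega
    rw [e1, e2, e3, e4]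
    have key := catalan_fact m
    have hne1 : (Nat.factorial (m+1) : ℚ) ≠ 0 := by positivity
    have hne2 : (Nat.factorial (m+2) : ℚ) ≠ 0 := by positivity
    rw [Nat.factorial_zero]
    field_simp
    have hq := congrArg (fun n : ℕ => (n:ℚ)) key
    push_cast at hq ⊢
    linarith [hq]
  | succ k ih =>
    intro j hj
    obtain ⟨m, rfl⟩ : ∃ m, j = m + 2 := ⟨j - 2, by omega⟩
    have hr := hrec (k+1) (m+2) (by omega) (by omega)
    simp only [Nat.add_sub_cancel] at hr
    rw [ih (m+3) (by omega)] at hr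
    have e2 : 3*(k+1) + 2*(m+2) - 4 = 3*k+2*m+3 := by omega
    have e3 : k+1 + (m+2) - 1 = k+m+2 := by omega
    have e5 : m + 2 - 1 = m + 1 := by omega
    rw [e2, e3]
    have f2 : 3*k + 2*(m+3) - 4 = 3*k+2*m+2 := by omega
    have f3 : k + (m+3) - 1 = k+m+2 := by omega
    have f5 : m + 3 - 1 = m + 2 := by omega
    rw [f2, f3] at hr
    have g1 : Nat.factorial (3*k+2*m+3) = (3*k+2*m+3) * Nat.factorial (3*k+2*m+2) := by
      rw [show 3*k+2*m+3 = (3*k+2*m+2)+1 by omega, Nat.factorial_succ]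
    have g2 : Nat.factorial (k+1) = (k+1) * Nat.factorial k := Nat.factorial_succ k
    have g3 : k + (m+3) = (k+m+3) := by omega
    have g4 : k + 1 + (m+2) = (k+m+3) := by omega
    rw [g3] at hr
    rw [g1, g2, g4]
    have hne0 : (Nat.factorial k : ℚ) ≠ 0 := by positivity
    have hne1 : (Nat.factorial (k+m+2) : ℚ) ≠ 0 := by positivity
    have hne2 : (Nat.factorial (k+m+3) : ℚ) ≠ 0 := by positivity
    have hne3 : ((k:ℚ)+1) ≠ 0 := by positivity
    have hne4 : ((m:ℚ)+3) ≠ 0 := by positivity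
    -- solve for t (k+1) (m+2)
    have ht : t (k+1) (m+2)
        = (((m:ℚ)+2) - 1) * (3*((k:ℚ)+1) + 2*((m:ℚ)+2) - 4)
          * (((m+3) * ((m:ℚ)+3-1) * Nat.factorial (3*k+2*m+2) : ℚ) /
            (Nat.factorial k * Nat.factorial (k+m+2) * Nat.factorial (k+m+3) : ℚ))
          / (((k:ℚ)+1) * (((m:ℚ)+2)+1)) := by
      field_simp at hr ⊢
      push_cast at hr
      linarith [hr]
    rw [ht]
    push_cast
    field_simp
    ring
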